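/- The Jacobian of the nonlinear system f(x,y) = λ₁(2μy − 4μxy − 2x² − 2xy + x), g(x,y) = λ₁(μy − 4μy² − 2xy − 2y² + y), evaluated at the fixed point (x_c, y_c) = ((μ+1)/(2μ+3), (μ+1)/(4μ+6)), has eigenvalues α₁ = −λ₁μ and α₂ = −λ₁(μ+1), both negative for λ₁, μ > 0. -/

import Mathlib

lemma deriv_quad (a b c x : ℝ) :
    deriv (fun x : ℝ => a * x ^ 2 + b * x + c) x = 2 * a * x + b := by
  have h2 : HasDerivAt (fun x : ℝ => x ^ 2) (2 * x) x := by
    simpa using hasDerivAt_pow 2 x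
  have h : HasDerivAt (fun x : ℝ => a * x ^ 2 + b * x + c) (2 * a * x + b) x := by
    have := ((h2.const_mul a).add ((hasDerivAt_id x).const_mul b)).add_const c
    refine this.congr_deriv ?_
    ring
  exact h.deriv

/-- The Jacobian of the nonlinear system at the fixed point
`((μ+1)/(2μ+3), (μ+1)/(4μ+6))` has eigenvalues `−λ₁μ` and `−λ₁(μ+1)`, both negative. -/
theorem jacobian_eigenvalues (lam mu : ℝ) (hlam : 0 < lam) (hmu : 0 < mu)
    (f g : ℝ → ℝ → ℝ)
    (hf : ∀ x y, f x y = lam * (2 * mu * y - 4 * mu * x * y - 2 * x ^ 2 - 2 * x * y + x))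
    (hg : ∀ x y, g x y = lam * (mu * y - 4 * mu * y ^ 2 - 2 * x * y - 2 * y ^ 2 + y))
    (xc yc : ℝ) (hxc : xc = (mu + 1) / (2 * mu + 3)) (hyc : yc = (mu + 1) / (4 * mu + 6))
    (J : Matrix (Fin 2) (Fin 2) ℝ)
    (hJ : J = !![deriv (fun x => f x yc) xc, deriv (fun y => f xc y) yc;
                 deriv (fun x => g x yc) xc, deriv (fun y => g xc y) yc]) :
    (J - (-(lam * mu)) • (1 : Matrix (Fin 2) (Fin 2) ℝ)).det = 0 ∧
    (J - (-(lam * (mu + 1))) • (1 : Matrix (Fin 2) (Fin 2) ℝ)).det = 0 ∧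
    -(lam * mu) < 0 ∧ -(lam * (mu + 1)) < 0 := by
  have e11 : (fun x => f x yc) = fun x : ℝ =>
      (-2 * lam) * x ^ 2 + (lam * (1 - 4 * mu * yc - 2 * yc)) * x + lam * (2 * mu * yc) := by
    funext x; rw [hf]; ring
  have e12 : (fun y => f xc y) = fun y : ℝ =>
      (0 : ℝ) * y ^ 2 + (lam * (2 * mu - 4 * mu * xc - 2 * xc)) * y + lam * (xc - 2 * xc ^ 2) := by
    funext y; rw [hf]; ring
  have e21 : (fun x => g x yc) = fun x : ℝ =>
      (0 : ℝ) * x ^ 2 + (-2 * lam * yc) * x +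
        lam * (mu * yc - 4 * mu * yc ^ 2 - 2 * yc ^ 2 + yc) := by
    funext x; rw [hg]; ring
  have e22 : (fun y => g xc y) = fun y : ℝ =>
      (lam * (-4 * mu - 2)) * y ^ 2 + (lam * (mu - 2 * xc + 1)) * y + (0 : ℝ) := by
    funext y; rw [hg]; ring
  have d11 := e11 ▸ deriv_quad (-2 * lam) (lam * (1 - 4 * mu * yc - 2 * yc)) (lam * (2 * mu * yc)) xc
  have d12 := e12 ▸ deriv_quad 0 (lam * (2 * mu - 4 * mu * xc - 2 * xc)) (lam * (xc - 2 * xc ^ 2)) yc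
  have d21 := e21 ▸ deriv_quad 0 (-2 * lam * yc) (lam * (mu * yc - 4 * mu * yc ^ 2 - 2 * yc ^ 2 + yc)) xc
  have d22 := e22 ▸ deriv_quad (lam * (-4 * mu - 2)) (lam * (mu - 2 * xc + 1)) 0 yc
  have h2 : (2 * mu + 3 : ℝ) ≠ 0 := by nlinarith
  have h4 : (4 * mu + 6 : ℝ) ≠ 0 := by nlinarith
  subst hJ hxc hyc
  rw [d11, d12, d21, d22]
  refine ⟨?_, ?_, by nlinarith, by nlinarith⟩ <;>
  · simp [Matrix.det_fin_two, Matrix.smul_apply, Matrix.one_apply]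
    field_simp
    ring
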